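/- Let (Ω, 𝔽, P) be a probability space with random variables X : Ω → 𝒳 and Y : Ω → 𝒴 taking values in standard Borel spaces, and Z : Ω → {1,2} measurable with 0 < P(Z = 1) < 1. Let P^{(j)} denote P conditioned on the event {Z = j}, for j ∈ {1,2}, and suppose the laws of X under P^{(1)} and under P^{(2)} are mutually absolutely continuous. Then Y and Z are conditionally independent given the σ-algebra generated by X under P if and only if a regular conditional distribution of Y given X under P^{(1)} and a regular conditional distribution of Y given X under P^{(2)} coincide for almost every x with respect to the law of X under P^{(1)} (equivalently, under P^{(2)}). -/

import Mathlib

open MeasureTheory ProbabilityTheory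

/-- `κ` is a regular conditional distribution of `Y` given `X` under the measure `Q`:
it is a Markov kernel and the joint law of `(X, Y)` under `Q` disintegrates as the law of
`X` composed with the kernel, i.e. `Q(X ∈ A, Y ∈ B) = ∫_A κ(x)(B) d(Q ∘ X⁻¹)(x)` for all
measurable `A`, `B`. -/
def IsRegCondDistrib {Ω 𝒳 𝒴 : Type*} [MeasurableSpace Ω] [MeasurableSpace 𝒳]
    [MeasurableSpace 𝒴] (Q : Measure Ω) (X : Ω → 𝒳) (Y : Ω → 𝒴)
    (κ : Kernel 𝒳 𝒴) : Prop :=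
  IsMarkovKernel κ ∧
  ∀ A : Set 𝒳, MeasurableSet A → ∀ B : Set 𝒴, MeasurableSet B →
    Q (X ⁻¹' A ∩ Y ⁻¹' B) = ∫⁻ x in A, κ x B ∂(Q.map X)

/-- `Y` and `Z` are conditionally independent given the σ-algebra `mX` under `P`:
`E[g(Y) h(Z) ∣ mX] = E[g(Y) ∣ mX] · E[h(Z) ∣ mX]` almost surely for all bounded
measurable `g`, `h`. -/
def CondIndepGiven {Ω 𝒴 : Type*} [MeasurableSpace Ω] [MeasurableSpace 𝒴]
    (P : Measure Ω) (mX : MeasurableSpace Ω) (Y : Ω → 𝒴) (Z : Ω → Bool) : Prop :=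
  ∀ g : 𝒴 → ℝ, Measurable g → (∃ C, ∀ y, |g y| ≤ C) →
  ∀ h : Bool → ℝ, Measurable h → (∃ C, ∀ b, |h b| ≤ C) →
    P[fun ω => g (Y ω) * h (Z ω)|mX]
      =ᵐ[P] fun ω => (P[fun ω' => g (Y ω')|mX]) ω * (P[fun ω' => h (Z ω')|mX]) ω

open scoped ENNReal

section AuxLemmas

variable {Ω 𝒳 𝒴 : Type*} [MeasurableSpace Ω] [MeasurableSpace 𝒳] [MeasurableSpace 𝒴]

lemma measure_prod_ext' {ρ₁ ρ₂ : Measure (𝒳 × 𝒴)} [IsFiniteMeasure ρ₁] [IsFiniteMeasure ρ₂]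
    (h : ∀ A : Set 𝒳, MeasurableSet A → ∀ B : Set 𝒴, MeasurableSet B →
      ρ₁ (A ×ˢ B) = ρ₂ (A ×ˢ B)) : ρ₁ = ρ₂ := by
  refine ext_of_generate_finite _ generateFrom_prod.symm isPiSystem_prod ?_ ?_
  · rintro _ ⟨A, hA, B, hB, rfl⟩
    exact h A hA B hB
  · simpa [Set.univ_prod_univ] using h Set.univ .univ Set.univ .univ

lemma integrable_of_abs_le {α : Type*} [MeasurableSpace α] {μ : Measure α} [IsFiniteMeasure μ]
    {f : α → ℝ} {C : ℝ} (hm : AEStronglyMeasurable f μ) (hbd : ∀ a, |f a| ≤ C) :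
    Integrable f μ :=
  ⟨hm, HasFiniteIntegral.of_bounded (C := C) (Filter.Eventually.of_forall fun a => by
    simpa [Real.norm_eq_abs] using hbd a)⟩

lemma IsRegCondDistrib.map_eq_compProd {Q : Measure Ω} [IsFiniteMeasure Q]
    {X : Ω → 𝒳} {Y : Ω → 𝒴} {κ : Kernel 𝒳 𝒴} (hX : Measurable X) (hY : Measurable Y)
    (hκ : IsRegCondDistrib Q X Y κ) :
    Q.map (fun ω => (X ω, Y ω)) = (Q.map X) ⊗ₘ κ := by
  haveI : IsMarkovKernel κ := hκ.1
  haveI : IsFiniteMeasure (Q.map X) := Measure.isFiniteMeasure_map Q X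
  haveI : IsFiniteMeasure (Q.map (fun ω => (X ω, Y ω))) := Measure.isFiniteMeasure_map _ _
  refine measure_prod_ext' fun A hA B hB => ?_
  rw [Measure.map_apply (hX.prodMk hY) (hA.prod hB), Set.mk_preimage_prod,
    Measure.compProd_apply_prod hA hB]
  exact hκ.2 A hA B hB

end AuxLemmas

/-- **Conditional independence is equivalent to equality of the two conditional
distributions** (the equivalence (2)).  Let `(Ω, 𝔽, P)` be a probability space with
random variables `X : Ω → 𝒳` and `Y : Ω → 𝒴` taking values in standard Borel spaces and
`Z : Ω → {1,2}` (encoded by `Bool`, `true` standing for `Z = 1`) with `0 < P(Z=1) < 1`.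
Let `P⁽ʲ⁾ = P[·∣Z=j]` and suppose the laws of `X` under `P⁽¹⁾` and `P⁽²⁾` are mutually
absolutely continuous.  Then `Y ⟂⟂ Z ∣ σ(X)` under `P` if and only if a regular
conditional distribution `κ₁` of `Y` given `X` under `P⁽¹⁾` and a regular conditional
distribution `κ₂` of `Y` given `X` under `P⁽²⁾` coincide for almost every `x` with
respect to the law of `X` under `P⁽¹⁾` (equivalently, under `P⁽²⁾`). -/


theorem condIndep_iff_regCondDistrib_ae_eq
    {Ω 𝒳 𝒴 : Type*} [MeasurableSpace Ω]
    [MeasurableSpace 𝒳] [StandardBorelSpace 𝒳]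
    [MeasurableSpace 𝒴] [StandardBorelSpace 𝒴]
    (P : Measure Ω) [IsProbabilityMeasure P]
    (X : Ω → 𝒳) (Y : Ω → 𝒴) (Z : Ω → Bool)
    (hX : Measurable X) (hY : Measurable Y) (hZ : Measurable Z)
    (hZpos : 0 < P {ω | Z ω = true}) (hZlt : P {ω | Z ω = true} < 1)
    (habs1 : (P[|{ω | Z ω = true}]).map X ≪ (P[|{ω | Z ω = false}]).map X)
    (habs2 : (P[|{ω | Z ω = false}]).map X ≪ (P[|{ω | Z ω = true}]).map X)
    (κ1 κ2 : Kernel 𝒳 𝒴)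
    (hκ1 : IsRegCondDistrib (P[|{ω | Z ω = true}]) X Y κ1)
    (hκ2 : IsRegCondDistrib (P[|{ω | Z ω = false}]) X Y κ2) :
    CondIndepGiven P (MeasurableSpace.comap X inferInstance) Y Z ↔
      ∀ᵐ x ∂((P[|{ω | Z ω = true}]).map X), κ1 x = κ2 x := by
  classical
  haveI : IsMarkovKernel κ1 := hκ1.1
  haveI : IsMarkovKernel κ2 := hκ2.1
  -- nonemptiness
  have hΩne : Nonempty Ω := by
    by_contra hne
    rw [not_nonempty_iff] at hne
    have h1 : P Set.univ = 1 := measure_univ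
    rw [Set.univ_eq_empty_iff.mpr hne, measure_empty] at h1
    exact zero_ne_one h1
  haveI : Nonempty 𝒴 := hΩne.map Y
  -- sets and measurability
  have hsT : MeasurableSet {ω | Z ω = true} := hZ (measurableSet_singleton true)
  have hsF : MeasurableSet {ω | Z ω = false} := hZ (measurableSet_singleton false)
  have hcompl : {ω | Z ω = false} = {ω | Z ω = true}ᶜ := by
    ext ω; simp
  have hpreT : Z ⁻¹' {true} = {ω | Z ω = true} := rfl
  have hpreF : Z ⁻¹' {false} = {ω | Z ω = false} := rfl
  -- probabilities
  have hpT0 : P {ω | Z ω = true} ≠ 0 := hZpos.ne'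
  have hpF0 : P {ω | Z ω = false} ≠ 0 := by
    rw [hcompl, measure_compl hsT (measure_ne_top _ _), measure_univ]
    simp only [ne_eq, tsub_eq_zero_iff_le, not_le]
    exact hZlt
  haveI hP1 : IsProbabilityMeasure (P[|{ω | Z ω = true}]) :=
    cond_isProbabilityMeasure hpT0
  haveI hP2 : IsProbabilityMeasure (P[|{ω | Z ω = false}]) :=
    cond_isProbabilityMeasure hpF0
  haveI : IsProbabilityMeasure ((P[|{ω | Z ω = true}]).map X) :=
    Measure.isProbabilityMeasure_map hX.aemeasurable
  haveI : IsProbabilityMeasure ((P[|{ω | Z ω = false}]).map X) :=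
    Measure.isProbabilityMeasure_map hX.aemeasurable
  haveI : IsProbabilityMeasure (P.map X) := Measure.isProbabilityMeasure_map hX.aemeasurable
  -- compProd identities for κ1, κ2
  have hρ1 : (P[|{ω | Z ω = true}]).map (fun ω => (X ω, Y ω))
      = ((P[|{ω | Z ω = true}]).map X) ⊗ₘ κ1 := hκ1.map_eq_compProd hX hY
  have hρ2 : (P[|{ω | Z ω = false}]).map (fun ω => (X ω, Y ω))
      = ((P[|{ω | Z ω = false}]).map X) ⊗ₘ κ2 := hκ2.map_eq_compProd hX hY
  -- the conditional distribution of Z given X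
  set r : Kernel 𝒳 Bool := condDistrib Z X P with hr_def
  -- withDensity identity
  have hwd : ∀ t : Set Bool, P (Z ⁻¹' t) ≠ 0 →
      (P.map X).withDensity (fun x => r x t) = P (Z ⁻¹' t) • ((P[|Z ⁻¹' t]).map X) := by
    intro t ht0
    have htm : MeasurableSet t := (Set.toFinite t).measurableSet
    ext A hA
    rw [withDensity_apply _ hA, Measure.smul_apply, smul_eq_mul, Measure.map_apply hX hA,
      cond_apply (hZ htm) P, Measure.restrict_map hX hA,
      lintegral_map (Kernel.measurable_coe r htm) hX,
      setLIntegral_preimage_condDistrib hX hZ.aemeasurable htm hA,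
      ← mul_assoc, ENNReal.mul_inv_cancel ht0 (measure_ne_top _ _), one_mul, Set.inter_comm]
  set ν : Kernel 𝒳 𝒴 := condDistrib Y X P with hν_def
  constructor
  · -- forward direction
    intro hCI
    have hCI₀ : ∀ g : 𝒴 → ℝ, Measurable g → (∃ C, ∀ y, |g y| ≤ C) →
        ∀ h : Bool → ℝ, Measurable h → (∃ C, ∀ b, |h b| ≤ C) →
        P[fun ω => g (Y ω) * h (Z ω)|MeasurableSpace.comap X inferInstance]
          =ᵐ[P] fun ω => (P[fun ω' => g (Y ω')|MeasurableSpace.comap X inferInstance]) ω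
            * (P[fun ω' => h (Z ω')|MeasurableSpace.comap X inferInstance]) ω := hCI
    have hmain : ∀ t : Set Bool, P (Z ⁻¹' t) ≠ 0 →
        (P[|Z ⁻¹' t]).map (fun ω => (X ω, Y ω)) = ((P[|Z ⁻¹' t]).map X) ⊗ₘ ν := by
      intro t ht0
      have htm : MeasurableSet t := (Set.toFinite t).measurableSet
      haveI : IsProbabilityMeasure (P[|Z ⁻¹' t]) := cond_isProbabilityMeasure ht0
      haveI : IsProbabilityMeasure ((P[|Z ⁻¹' t]).map X) :=
        Measure.isProbabilityMeasure_map hX.aemeasurable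
      haveI : IsFiniteMeasure ((P[|Z ⁻¹' t]).map (fun ω => (X ω, Y ω))) :=
        Measure.isFiniteMeasure_map _ _
      refine measure_prod_ext' fun A hA B hB => ?_
      have hνB_meas : Measurable fun x => ν x B := Kernel.measurable_coe ν hB
      have hrt_meas : Measurable fun x => r x t := Kernel.measurable_coe r htm
      have hle1 : ∀ x, ν x B * r x t ≤ 1 := fun x => mul_le_one' prob_le_one prob_le_one
      have hfin : ∫⁻ x in A, ν x B * r x t ∂(P.map X) ≠ ∞ := by
        refine ne_of_lt (lt_of_le_of_lt (lintegral_mono fun x => hle1 x) ?_)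
        rw [setLIntegral_one]
        exact measure_lt_top _ _
      -- key identity coming from conditional independence
      have hkey : ∫⁻ x in A, ν x B * r x t ∂(P.map X)
          = P (X ⁻¹' A ∩ (Y ⁻¹' B ∩ Z ⁻¹' t)) := by
        have hgB : Measurable (B.indicator (1 : 𝒴 → ℝ)) := measurable_one.indicator hB
        have hgBbd : ∃ C, ∀ y, |B.indicator (1 : 𝒴 → ℝ) y| ≤ C :=
          ⟨1, fun y => by by_cases hy : y ∈ B <;> simp [Set.indicator_apply, hy]⟩
        have hht : Measurable (t.indicator (1 : Bool → ℝ)) := measurable_one.indicator htm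
        have hhtbd : ∃ C, ∀ b, |t.indicator (1 : Bool → ℝ) b| ≤ C :=
          ⟨1, fun b => by by_cases hb : b ∈ t <;> simp [Set.indicator_apply, hb]⟩
        have hCI' := hCI₀ _ hgB hgBbd _ hht hhtbd
        have heq1 : (fun ω => B.indicator (1 : 𝒴 → ℝ) (Y ω))
            = (Y ⁻¹' B).indicator (fun _ => (1:ℝ)) := by
          funext ω; by_cases hy : Y ω ∈ B <;> simp [Set.indicator_apply, hy]
        have heq2 : (fun ω => t.indicator (1 : Bool → ℝ) (Z ω))
            = (Z ⁻¹' t).indicator (fun _ => (1:ℝ)) := by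
          funext ω; by_cases hb : Z ω ∈ t <;> simp [Set.indicator_apply, hb]
        have heq3 : (fun ω => B.indicator (1 : 𝒴 → ℝ) (Y ω) * t.indicator (1 : Bool → ℝ) (Z ω))
            = (Y ⁻¹' B ∩ Z ⁻¹' t).indicator (fun _ => (1:ℝ)) := by
          funext ω; by_cases hy : Y ω ∈ B <;> by_cases hb : Z ω ∈ t <;>
            simp [Set.indicator_apply, hy, hb]
        have hν_ce : (fun a => (ν (X a) B).toReal)
            =ᵐ[P] P[fun ω' => B.indicator (1 : 𝒴 → ℝ) (Y ω')|MeasurableSpace.comap X inferInstance] := by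
          rw [show (fun ω' => B.indicator (1 : 𝒴 → ℝ) (Y ω'))
              = (Y ⁻¹' B).indicator (fun _ => (1:ℝ)) from heq1]
          exact condDistrib_ae_eq_condExp (μ := P) hX hY hB
        have hr_ce : (fun a => (r (X a) t).toReal)
            =ᵐ[P] P[fun ω' => t.indicator (1 : Bool → ℝ) (Z ω')|MeasurableSpace.comap X inferInstance] := by
          rw [show (fun ω' => t.indicator (1 : Bool → ℝ) (Z ω'))
              = (Z ⁻¹' t).indicator (fun _ => (1:ℝ)) from heq2]
          exact condDistrib_ae_eq_condExp (μ := P) hX hZ htm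
        have hCI'' : P[(Y ⁻¹' B ∩ Z ⁻¹' t).indicator (fun _ => (1:ℝ))|MeasurableSpace.comap X inferInstance]
            =ᵐ[P] fun ω => (P[fun ω' => B.indicator (1 : 𝒴 → ℝ) (Y ω')|MeasurableSpace.comap X inferInstance]) ω
              * (P[fun ω' => t.indicator (1 : Bool → ℝ) (Z ω')|MeasurableSpace.comap X inferInstance]) ω := by
          rw [← heq3]; exact hCI'
        have hintBt : Integrable ((Y ⁻¹' B ∩ Z ⁻¹' t).indicator (fun _ => (1:ℝ))) P :=
          (integrable_const _).indicator ((hY hB).inter (hZ htm))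
        have hXA : MeasurableSet[MeasurableSpace.comap X inferInstance] (X ⁻¹' A) := ⟨A, hA, rfl⟩
        have hreal : (P (X ⁻¹' A ∩ (Y ⁻¹' B ∩ Z ⁻¹' t))).toReal
            = ∫ x in A, (ν x B).toReal * (r x t).toReal ∂(P.map X) := by
          calc (P (X ⁻¹' A ∩ (Y ⁻¹' B ∩ Z ⁻¹' t))).toReal
              = ∫ ω in X ⁻¹' A, (Y ⁻¹' B ∩ Z ⁻¹' t).indicator (fun _ => (1:ℝ)) ω ∂P := by
                rw [integral_indicator_const (1:ℝ) ((hY hB).inter (hZ htm)), measureReal_def,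
                  Measure.restrict_apply ((hY hB).inter (hZ htm)), smul_eq_mul, mul_one,
                  Set.inter_comm]
            _ = ∫ ω in X ⁻¹' A,
                  (P[(Y ⁻¹' B ∩ Z ⁻¹' t).indicator (fun _ => (1:ℝ))|MeasurableSpace.comap X inferInstance]) ω ∂P :=
                (setIntegral_condExp hX.comap_le hintBt hXA).symm
            _ = ∫ ω in X ⁻¹' A, (ν (X ω) B).toReal * (r (X ω) t).toReal ∂P := by
                refine setIntegral_congr_ae (hX hA) ?_
                filter_upwards [hCI'', hν_ce, hr_ce] with ω h1 h2 h3 _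
                rw [h1, ← h2, ← h3]
            _ = ∫ x in A, (ν x B).toReal * (r x t).toReal ∂(P.map X) := by
                rw [setIntegral_map (f := fun x => (ν x B).toReal * (r x t).toReal) hA
                  ((hνB_meas.ennreal_toReal.mul hrt_meas.ennreal_toReal).aestronglyMeasurable)
                  hX.aemeasurable]
        have hlift : ∫ x in A, (ν x B).toReal * (r x t).toReal ∂(P.map X)
            = (∫⁻ x in A, ν x B * r x t ∂(P.map X)).toReal := by
          rw [← integral_toReal (f := fun x => ν x B * r x t) ((hνB_meas.mul hrt_meas).aemeasurable.restrict)
            (ae_of_all _ fun x => lt_of_le_of_lt (hle1 x) ENNReal.one_lt_top)]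
          simp_rw [ENNReal.toReal_mul]
        exact (ENNReal.toReal_eq_toReal_iff' hfin (measure_ne_top _ _)).mp
          (by rw [← hlift, ← hreal])
      have hmul : P (Z ⁻¹' t) * ∫⁻ x in A, ν x B ∂((P[|Z ⁻¹' t]).map X)
          = P (X ⁻¹' A ∩ (Y ⁻¹' B ∩ Z ⁻¹' t)) := by
        calc P (Z ⁻¹' t) * ∫⁻ x in A, ν x B ∂((P[|Z ⁻¹' t]).map X)
            = ∫⁻ x in A, ν x B ∂(P (Z ⁻¹' t) • (P[|Z ⁻¹' t]).map X) := by
              rw [Measure.restrict_smul, lintegral_smul_measure, smul_eq_mul]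
          _ = ∫⁻ x in A, ν x B ∂((P.map X).withDensity (fun x => r x t)) := by
              rw [hwd t ht0]
          _ = ∫⁻ x in A, r x t * ν x B ∂(P.map X) := by
              rw [restrict_withDensity hA,
                lintegral_withDensity_eq_lintegral_mul _ hrt_meas hνB_meas]
              rfl
          _ = ∫⁻ x in A, ν x B * r x t ∂(P.map X) := by
              simp_rw [mul_comm]
          _ = P (X ⁻¹' A ∩ (Y ⁻¹' B ∩ Z ⁻¹' t)) := hkey
      rw [Measure.map_apply (hX.prodMk hY) (hA.prod hB), Set.mk_preimage_prod,
        cond_apply (hZ htm) P, Measure.compProd_apply_prod hA hB,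
        Set.inter_comm (Z ⁻¹' t) _, Set.inter_assoc, ← hmul, ← mul_assoc,
        ENNReal.inv_mul_cancel ht0 (measure_ne_top _ _), one_mul]
    -- a.e. equality of κ1 (resp. κ2) with ν
    have h1 : ∀ᵐ x ∂((P[|{ω | Z ω = true}]).map X), κ1 x = ν x := by
      have hfst : ((P[|{ω | Z ω = true}]).map (fun ω => (X ω, Y ω))).fst
          = (P[|{ω | Z ω = true}]).map X := Measure.fst_map_prodMk hY
      haveI : IsFiniteMeasure ((P[|{ω | Z ω = true}]).map (fun ω => (X ω, Y ω))) :=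
        Measure.isFiniteMeasure_map _ _
      have e1 := eq_condKernel_of_measure_eq_compProd
        (ρ := (P[|{ω | Z ω = true}]).map (fun ω => (X ω, Y ω))) κ1 (by rw [hfst]; exact hρ1)
      have e2 := eq_condKernel_of_measure_eq_compProd
        (ρ := (P[|{ω | Z ω = true}]).map (fun ω => (X ω, Y ω))) ν
        (by rw [hfst]; exact hmain {true} hpT0)
      rw [hfst] at e1 e2
      filter_upwards [e1, e2] with x hx1 hx2
      rw [hx1, hx2]
    have h2 : ∀ᵐ x ∂((P[|{ω | Z ω = false}]).map X), κ2 x = ν x := by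
      have hfst : ((P[|{ω | Z ω = false}]).map (fun ω => (X ω, Y ω))).fst
          = (P[|{ω | Z ω = false}]).map X := Measure.fst_map_prodMk hY
      haveI : IsFiniteMeasure ((P[|{ω | Z ω = false}]).map (fun ω => (X ω, Y ω))) :=
        Measure.isFiniteMeasure_map _ _
      have e1 := eq_condKernel_of_measure_eq_compProd
        (ρ := (P[|{ω | Z ω = false}]).map (fun ω => (X ω, Y ω))) κ2 (by rw [hfst]; exact hρ2)
      have e2 := eq_condKernel_of_measure_eq_compProd
        (ρ := (P[|{ω | Z ω = false}]).map (fun ω => (X ω, Y ω))) ν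
        (by rw [hfst]; exact hmain {false} hpF0)
      rw [hfst] at e1 e2
      filter_upwards [e1, e2] with x hx1 hx2
      rw [hx1, hx2]
    filter_upwards [h1, h2.filter_mono habs1.ae_le] with x hx1 hx2
    rw [hx1, hx2]
  · -- backward direction
    intro hae
    have hae' : ∀ᵐ x ∂((P[|{ω | Z ω = false}]).map X), κ1 x = κ2 x :=
      hae.filter_mono habs2.ae_le
    -- decomposition of P
    have hPdec : ∀ E : Set Ω, MeasurableSet E →
        P E = P {ω | Z ω = true} * (P[|{ω | Z ω = true}]) E
          + P {ω | Z ω = false} * (P[|{ω | Z ω = false}]) E := by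
      intro E hE
      rw [cond_apply hsT P, cond_apply hsF P, ← mul_assoc, ← mul_assoc,
        ENNReal.mul_inv_cancel hpT0 (measure_ne_top _ _),
        ENNReal.mul_inv_cancel hpF0 (measure_ne_top _ _), one_mul, one_mul, hcompl,
        Set.inter_comm {ω | Z ω = true} E, Set.inter_comm _ E, ← Set.diff_eq]
      exact (measure_inter_add_diff E hsT).symm
    -- decomposition of the law of X
    have hμdec : P.map X = P {ω | Z ω = true} • ((P[|{ω | Z ω = true}]).map X)
        + P {ω | Z ω = false} • ((P[|{ω | Z ω = false}]).map X) := by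
      ext A hA
      rw [Measure.add_apply, Measure.smul_apply, Measure.smul_apply, smul_eq_mul, smul_eq_mul,
        Measure.map_apply hX hA, Measure.map_apply hX hA, Measure.map_apply hX hA]
      exact hPdec _ (hX hA)
    -- κ1 disintegrates the joint law under P
    have hρP : P.map (fun ω => (X ω, Y ω)) = (P.map X) ⊗ₘ κ1 := by
      haveI : IsFiniteMeasure (P.map (fun ω => (X ω, Y ω))) := Measure.isFiniteMeasure_map _ _
      refine measure_prod_ext' fun A hA B hB => ?_
      rw [Measure.map_apply (hX.prodMk hY) (hA.prod hB), Set.mk_preimage_prod,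
        Measure.compProd_apply_prod hA hB, hPdec _ ((hX hA).inter (hY hB)),
        hκ1.2 A hA B hB, hκ2.2 A hA B hB, hμdec, Measure.restrict_add,
        Measure.restrict_smul, Measure.restrict_smul, lintegral_add_measure,
        lintegral_smul_measure, lintegral_smul_measure]
      congr 1
      congr 1
      exact (lintegral_congr_ae (ae_restrict_of_ae (hae'.mono fun x hx => by rw [hx]))).symm
    have hν1 : ∀ᵐ x ∂(P.map X), κ1 x = ν x :=
      (condDistrib_ae_eq_of_measure_eq_compProd X hY.aemeasurable hρP).mono fun x hx => hx.symm
    have hν1P : ∀ᵐ ω ∂P, κ1 (X ω) = ν (X ω) := ae_of_ae_map hX.aemeasurable hν1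
    intro g hg hgbd h hh hhbd
    obtain ⟨Cg, hCg⟩ := hgbd
    obtain ⟨Ch, hCh⟩ := hhbd
    have hCg0 : 0 ≤ Cg := le_trans (abs_nonneg _) (hCg (Classical.arbitrary 𝒴))
    set G : 𝒳 → ℝ := fun x => ∫ y, g y ∂(κ1 x) with hG_def
    set R : 𝒳 → ℝ := fun x => ∫ b, h b ∂(r x) with hR_def
    have hGm : StronglyMeasurable G :=
      (hg.stronglyMeasurable.comp_measurable measurable_snd).integral_kernel_prod_right'
        (κ := κ1)
    have hRm : StronglyMeasurable R :=
      (hh.stronglyMeasurable.comp_measurable measurable_snd).integral_kernel_prod_right'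
        (κ := r)
    have hGbd : ∀ x, |G x| ≤ Cg := fun x => by
      have := norm_integral_le_of_norm_le_const (μ := κ1 x) (f := g) (C := Cg)
        (Filter.Eventually.of_forall fun y => by simpa [Real.norm_eq_abs] using hCg y)
      simpa [Real.norm_eq_abs, measure_univ] using this
    have hRbd : ∀ x, |R x| ≤ Ch := fun x => by
      have := norm_integral_le_of_norm_le_const (μ := r x) (f := h) (C := Ch)
        (Filter.Eventually.of_forall fun b => by simpa [Real.norm_eq_abs] using hCh b)
      rw [measureReal_def, measure_univ, ENNReal.toReal_one, mul_one] at this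
      simpa [Real.norm_eq_abs] using this
    have hRexp : ∀ x, R x = h true * (r x {true}).toReal + h false * (r x {false}).toReal := by
      intro x
      show ∫ b, h b ∂(r x) = _
      rw [integral_fintype (Integrable.of_finite)]
      rw [Fintype.sum_bool]
      simp [mul_comm, measureReal_def]
    -- B1
    have hgY_int : Integrable (fun ω => g (Y ω)) P :=
      integrable_of_abs_le ((hg.comp hY).aestronglyMeasurable) (fun ω => hCg (Y ω))
    have hB1 : P[fun ω => g (Y ω)|MeasurableSpace.comap X inferInstance]
        =ᵐ[P] fun ω => G (X ω) := by
      have hb := condExp_ae_eq_integral_condDistrib (μ := P) hX hY.aemeasurable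
        hg.stronglyMeasurable hgY_int
      filter_upwards [hb, hν1P] with ω h1 h2
      rw [h1, hG_def]
      simp only []
      rw [h2]
    -- B2
    have hhZ_int : Integrable (fun ω => h (Z ω)) P :=
      integrable_of_abs_le ((hh.comp hZ).aestronglyMeasurable) (fun ω => hCh (Z ω))
    have hB2 : P[fun ω => h (Z ω)|MeasurableSpace.comap X inferInstance]
        =ᵐ[P] fun ω => R (X ω) := by
      have hb := condExp_ae_eq_integral_condDistrib (μ := P) hX hZ.aemeasurable
        hh.stronglyMeasurable hhZ_int
      filter_upwards [hb] with ω h1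
      rw [h1, hR_def]
    -- B3
    have hf_int : Integrable (fun ω => g (Y ω) * h (Z ω)) P :=
      integrable_of_abs_le (((hg.comp hY).mul (hh.comp hZ)).aestronglyMeasurable)
        (C := Cg * Ch) (fun ω => by
          rw [abs_mul]
          exact mul_le_mul (hCg _) (hCh _) (abs_nonneg _) hCg0)
    have hF_meas : Measurable (fun ω => G (X ω) * R (X ω)) :=
      (hGm.measurable.comp hX).mul (hRm.measurable.comp hX)
    have hF_int : Integrable (fun ω => G (X ω) * R (X ω)) P :=
      integrable_of_abs_le hF_meas.aestronglyMeasurable (C := Cg * Ch) (fun ω => by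
        rw [abs_mul]
        exact mul_le_mul (hGbd _) (hRbd _) (abs_nonneg _) hCg0)
    have hB3 : (fun ω => G (X ω) * R (X ω))
        =ᵐ[P] P[fun ω => g (Y ω) * h (Z ω)|MeasurableSpace.comap X inferInstance] := by
      refine ae_eq_condExp_of_forall_setIntegral_eq hX.comap_le hf_int
        (fun S _ _ => hF_int.integrableOn) ?_ ?_
      swap
      · refine StronglyMeasurable.aestronglyMeasurable ?_
        refine Measurable.stronglyMeasurable ?_
        exact ((hGm.measurable.comp (Measurable.of_comap_le le_rfl)).mul
          (hRm.measurable.comp (Measurable.of_comap_le le_rfl)))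
      rintro S ⟨A, hA, rfl⟩ -
      -- generic disintegration computation
      have hsetint : ∀ (Q : Measure Ω) (κ : Kernel 𝒳 𝒴) [IsProbabilityMeasure Q]
          [IsMarkovKernel κ], Q.map (fun ω => (X ω, Y ω)) = (Q.map X) ⊗ₘ κ →
          ∫ ω in X ⁻¹' A, g (Y ω) ∂Q = ∫ x in A, (∫ y, g y ∂κ x) ∂(Q.map X) := by
        intro Q κ hQ hκm hcomp
        haveI : IsProbabilityMeasure (Q.map X) := Measure.isProbabilityMeasure_map hX.aemeasurable
        have hint : IntegrableOn (fun p : 𝒳 × 𝒴 => g p.2) (A ×ˢ Set.univ) ((Q.map X) ⊗ₘ κ) :=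
          (integrable_of_abs_le ((hg.comp measurable_snd).aestronglyMeasurable)
            (fun p => hCg p.2)).integrableOn
        have hmgs : Measurable (fun p : 𝒳 × 𝒴 => g p.2) := hg.comp measurable_snd
        have e1 : ∫ p in A ×ˢ Set.univ, g p.2 ∂(Q.map (fun ω => (X ω, Y ω)))
            = ∫ ω in X ⁻¹' A, g (Y ω) ∂Q := by
          rw [setIntegral_map (hA.prod MeasurableSet.univ)
            hmgs.aestronglyMeasurable (hX.prodMk hY).aemeasurable,
            Set.mk_preimage_prod, Set.preimage_univ, Set.inter_univ]
        rw [← e1, hcomp, Measure.setIntegral_compProd hA MeasurableSet.univ hint]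
        simp_rw [Measure.restrict_univ]
      have hGint1 : ∫ ω in X ⁻¹' A, g (Y ω) ∂(P[|{ω | Z ω = true}])
          = ∫ x in A, G x ∂((P[|{ω | Z ω = true}]).map X) :=
        hsetint (P[|{ω | Z ω = true}]) κ1 hρ1
      have hGint2 : ∫ ω in X ⁻¹' A, g (Y ω) ∂(P[|{ω | Z ω = false}])
          = ∫ x in A, G x ∂((P[|{ω | Z ω = false}]).map X) := by
        rw [hsetint (P[|{ω | Z ω = false}]) κ2 hρ2]
        refine integral_congr_ae (ae_restrict_of_ae (hae'.mono fun x hx => ?_))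
        rw [hG_def]
        simp only []
        rw [hx]
      -- splitting the integral over Z = true / false
      have hdisj : Disjoint (X ⁻¹' A ∩ {ω | Z ω = true}) (X ⁻¹' A ∩ {ω | Z ω = false}) := by
        refine Set.disjoint_left.mpr ?_
        rintro ω ⟨-, h1⟩ ⟨-, h2⟩
        simp only [Set.mem_setOf_eq] at h1 h2
        rw [h1] at h2
        exact absurd h2 (by simp)
      have hcover : X ⁻¹' A = (X ⁻¹' A ∩ {ω | Z ω = true}) ∪ (X ⁻¹' A ∩ {ω | Z ω = false}) := by
        rw [← Set.inter_union_distrib_left,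
          show {ω | Z ω = true} ∪ {ω | Z ω = false} = Set.univ from by
            ext ω; cases hzb : Z ω <;> simp [hzb],
          Set.inter_univ]
      have hsplit : ∫ ω in X ⁻¹' A, g (Y ω) * h (Z ω) ∂P
          = (∫ ω in X ⁻¹' A ∩ {ω | Z ω = true}, g (Y ω) ∂P) * h true
            + (∫ ω in X ⁻¹' A ∩ {ω | Z ω = false}, g (Y ω) ∂P) * h false := by
        conv_lhs => rw [hcover]
        rw [setIntegral_union hdisj ((hX hA).inter hsF) hf_int.integrableOn hf_int.integrableOn]
        congr 1
        · rw [← integral_mul_const]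
          refine setIntegral_congr_fun ((hX hA).inter hsT) fun ω hω => ?_
          rw [show Z ω = true from hω.2]
        · rw [← integral_mul_const]
          refine setIntegral_congr_fun ((hX hA).inter hsF) fun ω hω => ?_
          rw [show Z ω = false from hω.2]
      -- conditioning scales set integrals
      have hscale : ∀ sb : Set Ω, MeasurableSet sb → P sb ≠ 0 →
          ∫ ω in X ⁻¹' A ∩ sb, g (Y ω) ∂P
            = (P sb).toReal * ∫ ω in X ⁻¹' A, g (Y ω) ∂(P[|sb]) := by
        intro sb hsb h0
        have hres : (P[|sb]).restrict (X ⁻¹' A) = (P sb)⁻¹ • P.restrict (X ⁻¹' A ∩ sb) := by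
          rw [ProbabilityTheory.cond, Measure.restrict_smul, Measure.restrict_restrict (hX hA)]
        rw [show ∫ ω in X ⁻¹' A, g (Y ω) ∂(P[|sb])
            = ∫ ω, g (Y ω) ∂((P[|sb]).restrict (X ⁻¹' A)) from rfl, hres,
          integral_smul_measure, ENNReal.toReal_inv, smul_eq_mul, ← mul_assoc,
          mul_inv_cancel₀ (ENNReal.toReal_ne_zero.mpr ⟨h0, measure_ne_top _ _⟩), one_mul]
      -- the withDensity computation
      have hGr : ∀ t : Set Bool, P (Z ⁻¹' t) ≠ 0 →
          ∫ x in A, (r x t).toReal * G x ∂(P.map X)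
            = (P (Z ⁻¹' t)).toReal * ∫ x in A, G x ∂((P[|Z ⁻¹' t]).map X) := by
        intro t ht0
        have htm : MeasurableSet t := (Set.toFinite t).measurableSet
        have hrt_meas : Measurable fun x => r x t := Kernel.measurable_coe r htm
        have hnn : Measurable fun x => (r x t).toNNReal := hrt_meas.ennreal_toNNReal
        have hwd' : (P.map X).withDensity (fun x => ((r x t).toNNReal : ℝ≥0∞))
            = P (Z ⁻¹' t) • ((P[|Z ⁻¹' t]).map X) := by
          rw [← hwd t ht0]
          congr 1
          funext x
          exact ENNReal.coe_toNNReal (measure_ne_top _ _)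
        calc ∫ x in A, (r x t).toReal * G x ∂(P.map X)
            = ∫ x in A, (r x t).toNNReal • G x ∂(P.map X) := by
              refine setIntegral_congr_fun hA fun x _ => ?_
              simp [NNReal.smul_def, ENNReal.toReal]
          _ = ∫ x in A, G x ∂((P.map X).withDensity (fun x => ((r x t).toNNReal : ℝ≥0∞))) :=
              (setIntegral_withDensity_eq_setIntegral_smul hnn _ hA).symm
          _ = (P (Z ⁻¹' t)).toReal * ∫ x in A, G x ∂((P[|Z ⁻¹' t]).map X) := by
              rw [hwd', Measure.restrict_smul, integral_smul_measure, smul_eq_mul]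
      -- bounding and integrability of the density terms
      have hbd_term : ∀ (c : ℝ) (t : Set Bool) (x : 𝒳), |c * ((r x t).toReal * G x)| ≤ |c| * Cg := by
        intro c t x
        have h1 : (r x t).toReal ≤ 1 := by
          simpa using ENNReal.toReal_mono ENNReal.one_ne_top (prob_le_one (μ := r x) (s := t))
        have h0 : (0:ℝ) ≤ (r x t).toReal := ENNReal.toReal_nonneg
        rw [abs_mul, abs_mul, abs_of_nonneg h0]
        calc |c| * ((r x t).toReal * |G x|) ≤ |c| * (1 * Cg) := by
              refine mul_le_mul_of_nonneg_left ?_ (abs_nonneg c)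
              exact mul_le_mul h1 (hGbd x) (abs_nonneg _) zero_le_one
          _ = |c| * Cg := by ring
      have hterm_int : ∀ (c : ℝ) (t : Set Bool), Integrable
          (fun x => c * ((r x t).toReal * G x)) (P.map X) := by
        intro c t
        have htm : MeasurableSet t := (Set.toFinite t).measurableSet
        exact integrable_of_abs_le
          ((measurable_const.mul (((Kernel.measurable_coe r htm).ennreal_toReal).mul
            hGm.measurable)).aestronglyMeasurable) (hbd_term c t)
      -- put everything together
      have hGRm : Measurable fun x => G x * R x := hGm.measurable.mul hRm.measurable
      calc ∫ ω in X ⁻¹' A, G (X ω) * R (X ω) ∂P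
          = ∫ x in A, G x * R x ∂(P.map X) := by
            rw [setIntegral_map hA hGRm.aestronglyMeasurable hX.aemeasurable]
        _ = ∫ x in A, (h true * ((r x {true}).toReal * G x)
              + h false * ((r x {false}).toReal * G x)) ∂(P.map X) := by
            refine integral_congr_ae (Filter.Eventually.of_forall fun x => ?_)
            show G x * R x = _
            rw [hRexp x]; ring
        _ = h true * ∫ x in A, (r x {true}).toReal * G x ∂(P.map X)
            + h false * ∫ x in A, (r x {false}).toReal * G x ∂(P.map X) := by
            rw [integral_add ((hterm_int (h true) {true}).integrableOn)
              ((hterm_int (h false) {false}).integrableOn),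
              integral_const_mul, integral_const_mul]
        _ = h true * ((P {ω | Z ω = true}).toReal
              * ∫ x in A, G x ∂((P[|{ω | Z ω = true}]).map X))
            + h false * ((P {ω | Z ω = false}).toReal
              * ∫ x in A, G x ∂((P[|{ω | Z ω = false}]).map X)) := by
            rw [hGr {true} hpT0, hGr {false} hpF0, hpreT, hpreF]
        _ = ∫ ω in X ⁻¹' A, g (Y ω) * h (Z ω) ∂P := by
            rw [hsplit, hscale _ hsT hpT0, hscale _ hsF hpF0, hGint1, hGint2]
            ring
    -- combine
    filter_upwards [hB3, hB1, hB2] with ω h3 h1 h2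
    rw [← h3, h1, h2]
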